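/- Let ‖·‖_X be a norm on ℝ² with B_E ⊆ B_X ⊆ K·B_E, K ≥ 1. Let x, y ∈ S_X with the angle between rays r_{0,x} and r_{0,y} at most arccos(1/K), let x^⊥ ∈ S_E ∩ {x}^⊥ with ⟨x^⊥, y⟩ ≥ 0, and v := x + x^⊥. Then the angle between the rays r_{x,v} and r_{x,y} is at most arccos(1/K). -/

import Mathlib

open Set Real
open scoped RealInnerProductSpace

set_option maxHeartbeats 1000000 in
theorem quadmin' (c q A : ℝ) (h1 : 1 < q) (hA : 1 ≤ A) (hAq : A ≤ q)
    (hf : ∀ t : ℝ, 0 ≤ t → t ≤ 1 → (1-t)^2 ≤ c - 2*t*A + t^2*q) :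
    (A-1)^2 ≤ (c-1)*(q-1) := by
  have hq : (0:ℝ) < q - 1 := by linarith
  set u := (A-1)/(q-1) with hu
  have ht : u*(q-1) = A-1 := div_mul_cancel₀ _ hq.ne'
  have ht0 : 0 ≤ u := div_nonneg (by linarith) hq.le
  have ht1 : u ≤ 1 := by rw [hu, div_le_one hq]; linarith
  have hp := hf u ht0 ht1
  have ht2 : u*(u*(q-1)) = u*(A-1) := by rw [ht]
  have hc : u^2*(q-1) ≤ c - 1 := by nlinarith [hp, ht2]
  have h3 := mul_le_mul_of_nonneg_right hc hq.le
  have h4 : (A-1)^2 = u^2*(q-1)*(q-1) := by rw [← ht]; ring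
  linarith

set_option maxHeartbeats 1000000 in
theorem keyineq' (K r ny A b : ℝ) (hK : 1 ≤ K) (hr1 : 1 ≤ r) (hrK : r ≤ K)
    (hny1 : 1 ≤ ny) (hnyK : ny ≤ K) (hb : 0 ≤ b)
    (hang : r * ny ≤ K * A) (hP : A^2 + r^2*b^2 = r^2*ny^2) (hCS : A ≤ r * ny)
    (P1 : ∀ t : ℝ, 0 ≤ t → t ≤ 1 → (1-t)^2 ≤ ny^2 - 2*t*A + t^2*r^2)
    (P2 : ∀ t : ℝ, 0 ≤ t → t ≤ 1 → (1-t)^2 ≤ r^2 - 2*t*A + t^2*ny^2) :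
    ny^2 - 2*A + r^2 ≤ K^2*b^2 := by
  have hK0 : (0:ℝ) < K := lt_of_lt_of_le one_pos hK
  have hr0 : (0:ℝ) < r := lt_of_lt_of_le one_pos hr1
  have hny0 : (0:ℝ) < ny := lt_of_lt_of_le one_pos hny1
  have hA0 : 0 < A := by nlinarith
  have hP2 : K^2*A^2 + K^2*(r^2*b^2) = K^2*(r^2*ny^2) := by linear_combination K^2*hP
  rcases le_or_gt A 1 with hA1 | hA1
  · have hang' : r ≤ K * A := by nlinarith
    have chord : (r^2 - A)^2 ≤ (K^2 - 1) * (r^2 - A^2) := by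
      nlinarith [mul_nonneg (mul_nonneg (sub_nonneg.2 hang') (sub_nonneg.2 hA1)) (sub_nonneg.2 hrK),
        mul_nonneg (sub_nonneg.2 hrK) (by nlinarith : (0:ℝ) ≤ K*(K+r) - 2),
        mul_nonneg (by nlinarith : (0:ℝ) ≤ r^2 - 1) (by nlinarith : (0:ℝ) ≤ K^2 - r^2),
        mul_nonneg (sub_nonneg.2 hang') (sub_nonneg.2 hA1), sq_nonneg (K*A - r), sq_nonneg (A-1),
        mul_pos hK0 hr0]
    have h2 : r^2 - A^2 ≤ r^2*b^2 := by
      nlinarith [mul_nonneg (sq_nonneg r) (by nlinarith : (0:ℝ) ≤ ny^2 - 1)]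
    have hK1 : (0:ℝ) ≤ K^2 - 1 := by nlinarith
    have step := mul_le_mul_of_nonneg_left h2 hK1
    have final : r^2*(ny^2-2*A+r^2) ≤ r^2*(K^2*b^2) := by linarith [chord, step, hP]
    exact (mul_le_mul_iff_right₀ (pow_pos hr0 2)).mp final
  · have diamond : (A-1)^2 ≤ (ny^2-1)*(r^2-1) := by
      rcases le_or_gt A (r^2) with hAr | hAr
      · have h := quadmin' (ny^2) (r^2) A (lt_of_lt_of_le hA1 hAr) hA1.le hAr P1
        linarith [h]
      · have hrny : r < ny := by nlinarith
        have hAs : A ≤ ny^2 := by nlinarith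
        have h := quadmin' (r^2) (ny^2) A (lt_of_lt_of_le hA1 hAs) hA1.le hAs P2
        nlinarith [h]
    have hsR : 0 ≤ ny^2 + r^2 - 2*A := by nlinarith [sq_nonneg (ny - r)]
    have hKR : 0 ≤ K^2 - r^2 := by nlinarith
    have key : 0 ≤ (K^2 - r^2) * (ny^2 + r^2 - 2*A) := mul_nonneg hKR hsR
    have d2 : ny^2 + r^2 - 2*A ≤ r^2*ny^2 - A^2 := by nlinarith [diamond]
    have step2 := mul_le_mul_of_nonneg_left d2 (le_of_lt (mul_pos hK0 hK0))
    have final : r^2*(ny^2-2*A+r^2) ≤ r^2*(K^2*b^2) := by nlinarith [key, step2, hP2]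
    exact (mul_le_mul_iff_right₀ (pow_pos hr0 2)).mp final


set_option maxHeartbeats 1000000 in
theorem stmt15 (N : EuclideanSpace ℝ (Fin 2) → ℝ)
    (hN_add : ∀ v w, N (v + w) ≤ N v + N w)
    (hN_smul : ∀ (a : ℝ) (w : EuclideanSpace ℝ (Fin 2)), N (a • w) = |a| * N w)
    (hN_def : ∀ w, N w = 0 → w = 0)
    (hNE : ∀ w, N w ≤ ‖w‖)
    (K : ℝ) (hK : 1 ≤ K) (hKE : ∀ w, ‖w‖ ≤ K * N w)
    (x y xp : EuclideanSpace ℝ (Fin 2))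
    (hxX : N x = 1) (hyX : N y = 1) (hxy : y ≠ x)
    (hxp : ‖xp‖ = 1) (hperp : ⟪x, xp⟫ = 0) (hside : 0 ≤ ⟪xp, y⟫)
    (v : EuclideanSpace ℝ (Fin 2)) (hv : v = x + xp)
    (hangle : Real.arccos (⟪x, y⟫ / (‖x‖ * ‖y‖)) ≤ Real.arccos K⁻¹) :
    Real.arccos (⟪v - x, y - x⟫ / (‖v - x‖ * ‖y - x‖)) ≤ Real.arccos K⁻¹ := by
  subst hv
  have hK0 : (0:ℝ) < K := lt_of_lt_of_le one_pos hK
  have hxn : 1 ≤ ‖x‖ := by have := hNE x; rw [hxX] at this; linarith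
  have hyn : 1 ≤ ‖y‖ := by have := hNE y; rw [hyX] at this; linarith
  have hxK : ‖x‖ ≤ K := by have := hKE x; rw [hxX] at this; linarith
  have hyK : ‖y‖ ≤ K := by have := hKE y; rw [hyX] at this; linarith
  have hx0 : (0:ℝ) < ‖x‖ := by linarith
  have hy0 : (0:ℝ) < ‖y‖ := by linarith
  -- angle extraction
  have hcs := abs_real_inner_div_norm_mul_norm_le_one x y
  have hKinv : K⁻¹ ≤ ⟪x, y⟫ / (‖x‖ * ‖y‖) := by
    by_contra hcon
    push_neg at hcon
    have hmem1 : ⟪x, y⟫ / (‖x‖ * ‖y‖) ∈ Set.Icc (-1:ℝ) 1 := by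
      rcases abs_le.mp hcs with ⟨h1, h2⟩; exact ⟨h1, h2⟩
    have hmem2 : K⁻¹ ∈ Set.Icc (-1:ℝ) 1 := by
      constructor
      · have : (0:ℝ) ≤ K⁻¹ := by positivity
        linarith
      · exact inv_le_one_of_one_le₀ hK
    have := Real.strictAntiOn_arccos hmem1 hmem2 hcon
    linarith
  have hang : ‖x‖ * ‖y‖ ≤ K * ⟪x, y⟫ := by
    rw [le_div_iff₀ (by positivity)] at hKinv
    have := mul_le_mul_of_nonneg_left hKinv hK0.le
    rw [← mul_assoc, mul_inv_cancel₀ hK0.ne', one_mul] at this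
    linarith
  -- Parseval via areaForm
  haveI : Fact (Module.finrank ℝ (EuclideanSpace ℝ (Fin 2)) = 2) :=
    ⟨finrank_euclideanSpace_fin⟩
  set o := (EuclideanSpace.basisFun (Fin 2) ℝ).toBasis.orientation with ho
  have hq2 := o.inner_sq_add_areaForm_sq x y
  have hq1 := o.inner_mul_inner_add_areaForm_mul_areaForm x xp y
  have hq3 := o.abs_areaForm_of_orthogonal hperp
  rw [hperp, zero_mul, zero_add] at hq1
  rw [hxp, mul_one] at hq3
  have e2 : (o.areaForm x xp)^2 = ‖x‖^2 := by rw [← sq_abs, hq3]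
  have e3 : (o.areaForm x y)^2 = ‖x‖^2 * ⟪xp, y⟫^2 := by
    have h5 : (o.areaForm x xp * o.areaForm x y)^2 = (‖x‖^2 * ⟪xp, y⟫)^2 := by rw [hq1]
    rw [mul_pow, e2, mul_pow] at h5
    have h6 : ‖x‖^2 ≠ 0 := by positivity
    field_simp at h5 ⊢
    nlinarith [h5]
  have hPar : ⟪x, y⟫^2 + ‖x‖^2 * ⟪xp, y⟫^2 = ‖x‖^2 * ‖y‖^2 := by
    rw [← e3]; exact hq2
  -- the two families of inequalities from the norm N
  have hP1 : ∀ t : ℝ, 0 ≤ t → t ≤ 1 → (1-t)^2 ≤ ‖y‖^2 - 2*t*⟪x, y⟫ + t^2*‖x‖^2 := by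
    intro t ht0 ht1
    have key : 1 - t ≤ ‖y - t • x‖ := by
      have h1 := hN_add (t • x) (y - t • x)
      rw [show t • x + (y - t • x) = y by abel] at h1
      rw [hyX, hN_smul, hxX, mul_one, abs_of_nonneg ht0] at h1
      have h2 := hNE (y - t • x)
      linarith
    have key2 : (1-t)^2 ≤ ‖y - t • x‖^2 := by
      rcases le_or_gt (1 - t) 0 with h | h
      · nlinarith [sq_nonneg (‖y - t • x‖)]
      · exact pow_le_pow_left₀ h.le key 2
    rw [norm_sub_sq_real, real_inner_smul_right, norm_smul, Real.norm_eq_abs,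
      abs_of_nonneg ht0] at key2
    rw [← real_inner_comm y x] at key2
    nlinarith [key2]
  have hP2 : ∀ t : ℝ, 0 ≤ t → t ≤ 1 → (1-t)^2 ≤ ‖x‖^2 - 2*t*⟪x, y⟫ + t^2*‖y‖^2 := by
    intro t ht0 ht1
    have key : 1 - t ≤ ‖x - t • y‖ := by
      have h1 := hN_add (t • y) (x - t • y)
      rw [show t • y + (x - t • y) = x by abel] at h1
      rw [hxX, hN_smul, hyX, mul_one, abs_of_nonneg ht0] at h1
      have h2 := hNE (x - t • y)
      linarith
    have key2 : (1-t)^2 ≤ ‖x - t • y‖^2 := by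
      rcases le_or_gt (1 - t) 0 with h | h
      · nlinarith [sq_nonneg (‖x - t • y‖)]
      · exact pow_le_pow_left₀ h.le key 2
    rw [norm_sub_sq_real, real_inner_smul_right, norm_smul, Real.norm_eq_abs,
      abs_of_nonneg ht0] at key2
    nlinarith [key2]
  have main := keyineq' K ‖x‖ ‖y‖ ⟪x, y⟫ ⟪xp, y⟫ hK hxn hxK hyn hyK hside hang
    (by linarith [hPar]) (real_inner_le_norm x y) hP1 hP2
  -- translate back to the goal
  have hyx0 : (0:ℝ) < ‖y - x‖ := by
    rw [norm_pos_iff]; exact sub_ne_zero.2 hxy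
  have hnorm : ‖y - x‖^2 = ‖y‖^2 - 2*⟪x, y⟫ + ‖x‖^2 := by
    rw [norm_sub_sq_real, real_inner_comm]
  have hKb : ‖y - x‖ ≤ K * ⟪xp, y⟫ := by
    nlinarith [main, hnorm, mul_nonneg hK0.le hside, hyx0, sq_nonneg (‖y - x‖ - K * ⟪xp, y⟫)]
  have hvx : x + xp - x = xp := by abel
  rw [hvx, hxp, one_mul]
  have hinner : ⟪xp, y - x⟫ = ⟪xp, y⟫ := by
    rw [inner_sub_right, ← real_inner_comm xp x, hperp]
    exact sub_zero _
  rw [hinner]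
  have hfinal : K⁻¹ ≤ ⟪xp, y⟫ / ‖y - x‖ := by
    rw [le_div_iff₀ hyx0]
    have := mul_le_mul_of_nonneg_left hKb (by positivity : (0:ℝ) ≤ K⁻¹)
    rw [← mul_assoc, inv_mul_cancel₀ hK0.ne', one_mul] at this
    linarith
  rw [Real.arccos_eq_pi_div_two_sub_arcsin, Real.arccos_eq_pi_div_two_sub_arcsin]
  have := Real.monotone_arcsin hfinal
  linarith
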